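/- arXiv:0705.1345 — 8 statements merged into one kernel-verified Lean document; each statement's English description precedes it below -/
import Mathlib

section
/- Let p, q ∈ [0,1] and y ≤ x be real numbers with y ≥ 0. Then p·(1−2q)·(e^{y/2} − e^{−y/2}) − p·e^{x/2} − (1−p)·e^{−x/2} ≤ 0. -/
/-- Key pointwise inequality for subadditivity of the Bhattacharyya parameter
under the min-sum check node operation. -/
theorem gbsc_pointwise_ineq (p q x y : ℝ)
    (hp : p ∈ Set.Icc (0:ℝ) 1) (hq : q ∈ Set.Icc (0:ℝ) 1)
    (hy : 0 ≤ y) (hyx : y ≤ x) :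
    p * (1 - 2*q) * (Real.exp (y/2) - Real.exp (-y/2))
      - p * Real.exp (x/2) - (1 - p) * Real.exp (-x/2) ≤ 0 := by
  obtain ⟨hp0, hp1⟩ := hp
  obtain ⟨hq0, hq1⟩ := hq
  have hD : 0 ≤ Real.exp (y/2) - Real.exp (-y/2) := by
    have : -y/2 ≤ y/2 := by linarith
    have := Real.exp_le_exp.mpr this
    simpa [neg_div] using sub_nonneg.mpr this
  have h1 : Real.exp (y/2) ≤ Real.exp (x/2) := Real.exp_le_exp.mpr (by linarith)
  have h2 : (0:ℝ) < Real.exp (-y/2) := Real.exp_pos _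
  have h3 : (0:ℝ) < Real.exp (-x/2) := Real.exp_pos _
  nlinarith [mul_nonneg hp0 hD, mul_nonneg (mul_nonneg hp0 hq0) hD,
    mul_nonneg hp0 h2.le, mul_nonneg (sub_nonneg.mpr hp1) h3.le,
    mul_le_mul_of_nonneg_left h1 hp0]
end

section
/- Let X and Y be independent real-valued random variables and define Z = sign(X)·sign(Y)·min(|X|,|Y|) (with the convention sign(0)=0, or assuming X, Y are almost surely nonzero). Then E[e^{−Z/2}] ≤ E[e^{−X/2}] + E[e^{−Y/2}]. -/
open MeasureTheory ProbabilityTheory Real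

lemma minsum_key (a b : ℝ) :
    a ≤ Real.sign a * Real.sign b * min |a| |b| ∨
    b ≤ Real.sign a * Real.sign b * min |a| |b| := by
  rcases lt_trichotomy a 0 with ha | ha | ha <;>
    rcases lt_trichotomy b 0 with hb | hb | hb
  · left
    rw [Real.sign_of_neg ha, Real.sign_of_neg hb]
    have h0 : (0:ℝ) ≤ min |a| |b| := le_min (abs_nonneg _) (abs_nonneg _)
    nlinarith
  · left; simp [hb, Real.sign_zero]; linarith
  · left
    rw [Real.sign_of_neg ha, Real.sign_of_pos hb, abs_of_neg ha]
    have : min (-a) |b| ≤ -a := min_le_left _ _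
    nlinarith
  · left; simp [ha, Real.sign_zero]
  · left; simp [ha, Real.sign_zero]
  · left; simp [ha, Real.sign_zero]
  · right
    rw [Real.sign_of_pos ha, Real.sign_of_neg hb, abs_of_neg hb]
    have : min |a| (-b) ≤ -b := min_le_right _ _
    nlinarith
  · right; simp [hb, Real.sign_zero]
  · rcases le_total a b with h | h
    · left
      rw [Real.sign_of_pos ha, Real.sign_of_pos hb, abs_of_pos ha, abs_of_pos hb]
      simp [min_eq_left h]
    · right
      rw [Real.sign_of_pos ha, Real.sign_of_pos hb, abs_of_pos ha, abs_of_pos hb]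
      simp [min_eq_right h]

lemma minsum_exp_le (a b : ℝ) :
    Real.exp (-(Real.sign a * Real.sign b * min |a| |b|) / 2)
      ≤ Real.exp (-a / 2) + Real.exp (-b / 2) := by
  rcases minsum_key a b with h | h
  · have : Real.exp (-(Real.sign a * Real.sign b * min |a| |b|) / 2)
        ≤ Real.exp (-a / 2) := Real.exp_le_exp.2 (by linarith)
    linarith [Real.exp_pos (-b / 2)]
  · have : Real.exp (-(Real.sign a * Real.sign b * min |a| |b|) / 2)
        ≤ Real.exp (-b / 2) := Real.exp_le_exp.2 (by linarith)
    linarith [Real.exp_pos (-a / 2)]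

lemma measurable_real_sign : Measurable Real.sign := by
  have : Real.sign = fun x : ℝ => if x < 0 then (-1 : ℝ) else if 0 < x then 1 else 0 := by
    funext x; rfl
  rw [this]
  exact Measurable.ite measurableSet_Iio
    measurable_const (Measurable.ite measurableSet_Ioi measurable_const measurable_const)

/-- Subadditivity of the Bhattacharyya parameter `B(W) = E[exp(-W/2)]` under
the min-sum check node operation `Z = sign(X) sign(Y) min(|X|,|Y|)`. -/
theorem bhattacharyya_subadd_minsum
    {Ω : Type*} [MeasureSpace Ω] [IsProbabilityMeasure (ℙ : Measure Ω)]
    (X Y : Ω → ℝ) (hX : Measurable X) (hY : Measurable Y)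
    (hindep : IndepFun X Y ℙ)
    (hXi : Integrable (fun ω => Real.exp (-X ω / 2)) ℙ)
    (hYi : Integrable (fun ω => Real.exp (-Y ω / 2)) ℙ) :
    (∫ ω, Real.exp (-(Real.sign (X ω) * Real.sign (Y ω) * min |X ω| |Y ω|) / 2))
      ≤ (∫ ω, Real.exp (-X ω / 2)) + ∫ ω, Real.exp (-Y ω / 2) := by
  have hZmeas : Measurable fun ω =>
      Real.exp (-(Real.sign (X ω) * Real.sign (Y ω) * min |X ω| |Y ω|) / 2) := by
    apply Measurable.exp
    apply Measurable.div_const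
    apply Measurable.neg
    exact ((measurable_real_sign.comp hX).mul (measurable_real_sign.comp hY)).mul
      (hX.abs.min hY.abs)
  have hbound : ∀ ω, Real.exp (-(Real.sign (X ω) * Real.sign (Y ω) * min |X ω| |Y ω|) / 2)
      ≤ Real.exp (-X ω / 2) + Real.exp (-Y ω / 2) := fun ω => minsum_exp_le _ _
  have hZi : Integrable (fun ω =>
      Real.exp (-(Real.sign (X ω) * Real.sign (Y ω) * min |X ω| |Y ω|) / 2)) ℙ := by
    refine (hXi.add hYi).mono hZmeas.aestronglyMeasurable (ae_of_all _ fun ω => ?_)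
    simp only [Pi.add_apply, Real.norm_eq_abs, Real.abs_exp]
    exact (hbound ω).trans (le_abs_self _)
  calc (∫ ω, Real.exp (-(Real.sign (X ω) * Real.sign (Y ω) * min |X ω| |Y ω|) / 2))
      ≤ ∫ ω, (Real.exp (-X ω / 2) + Real.exp (-Y ω / 2)) :=
        integral_mono hZi (hXi.add hYi) hbound
    _ = (∫ ω, Real.exp (-X ω / 2)) + ∫ ω, Real.exp (-Y ω / 2) :=
        integral_add hXi hYi
end

section
/- Let X and Y be independent real random variables, α > 0, and Z = sign(X)·sign(Y)·min(|X|,|Y|) (with X, Y almost surely nonzero). Then E[e^{−αZ}] ≤ E[e^{−αX}] + E[e^{−αY}]. -/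
open MeasureTheory ProbabilityTheory Real

lemma sign_monotone_real : Monotone Real.sign := by
  intro a b hab
  rcases lt_trichotomy a 0 with ha | ha | ha
  · rw [Real.sign_of_neg ha]
    rcases lt_trichotomy b 0 with hb | hb | hb
    · rw [Real.sign_of_neg hb]
    · simp [hb, Real.sign_zero]
    · rw [Real.sign_of_pos hb]; norm_num
  · subst ha
    rcases lt_or_eq_of_le hab with hb | hb
    · rw [Real.sign_of_pos hb, Real.sign_zero]; norm_num
    · rw [← hb]
  · rw [Real.sign_of_pos ha, Real.sign_of_pos (lt_of_lt_of_le ha hab)]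

lemma key_pointwise (α x y : ℝ) (hα : 0 < α) (hx : x ≠ 0) (hy : y ≠ 0) :
    Real.exp (-α * (Real.sign x * Real.sign y * min |x| |y|))
      ≤ Real.exp (-α * x) + Real.exp (-α * y) := by
  rcases hx.lt_or_gt with hxneg | hxpos
  · rcases hy.lt_or_gt with hyneg | hypos
    · -- both negative: Z > 0, exp(-αZ) ≤ 1 ≤ exp(-αx)
      rw [Real.sign_of_neg hxneg, Real.sign_of_neg hyneg]
      have h1 : Real.exp (-α * ((-1 : ℝ) * -1 * min |x| |y|)) ≤ 1 := by
        rw [Real.exp_le_one_iff]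
        have : (0:ℝ) < min |x| |y| := lt_min (abs_pos.2 hx) (abs_pos.2 hy)
        nlinarith
      have h2 : (1:ℝ) ≤ Real.exp (-α * x) := by
        rw [Real.one_le_exp_iff]; nlinarith
      have h3 : (0:ℝ) < Real.exp (-α * y) := Real.exp_pos _
      linarith
    · -- x < 0 < y : Z = -min |x| y, exp(-αZ) = exp(α min |x| y) ≤ exp(-αx)
      rw [Real.sign_of_neg hxneg, Real.sign_of_pos hypos]
      have h1 : Real.exp (-α * ((-1 : ℝ) * 1 * min |x| |y|)) ≤ Real.exp (-α * x) := by
        apply Real.exp_le_exp.2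
        have : min |x| |y| ≤ |x| := min_le_left _ _
        have hax : |x| = -x := abs_of_neg hxneg
        nlinarith
      have h3 : (0:ℝ) < Real.exp (-α * y) := Real.exp_pos _
      linarith
  · rcases hy.lt_or_gt with hyneg | hypos
    · -- y < 0 < x
      rw [Real.sign_of_pos hxpos, Real.sign_of_neg hyneg]
      have h1 : Real.exp (-α * ((1 : ℝ) * -1 * min |x| |y|)) ≤ Real.exp (-α * y) := by
        apply Real.exp_le_exp.2
        have : min |x| |y| ≤ |y| := min_le_right _ _
        have hay : |y| = -y := abs_of_neg hyneg
        nlinarith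
      have h3 : (0:ℝ) < Real.exp (-α * x) := Real.exp_pos _
      linarith
    · -- both positive: Z = min x y
      rw [Real.sign_of_pos hxpos, Real.sign_of_pos hypos,
        abs_of_pos hxpos, abs_of_pos hypos]
      rcases min_cases x y with ⟨hm, _⟩ | ⟨hm, _⟩ <;> rw [hm]
      · have h3 : (0:ℝ) < Real.exp (-α * y) := Real.exp_pos _
        simp only [one_mul]
        linarith
      · have h3 : (0:ℝ) < Real.exp (-α * x) := Real.exp_pos _
        simp only [one_mul]
        linarith

/-- Subadditivity of the functional `B_α(W) = E[exp(-αW)]`, `α > 0`, under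
the min-sum check node operation `Z = sign(X) sign(Y) min(|X|,|Y|)`. -/
theorem exp_moment_subadd_minsum
    {Ω : Type*} [MeasureSpace Ω] [IsProbabilityMeasure (ℙ : Measure Ω)]
    (X Y : Ω → ℝ) (hX : Measurable X) (hY : Measurable Y)
    (hindep : IndepFun X Y ℙ)
    (hXne : ∀ᵐ ω ∂ℙ, X ω ≠ 0) (hYne : ∀ᵐ ω ∂ℙ, Y ω ≠ 0)
    (α : ℝ) (hα : 0 < α)
    (hXi : Integrable (fun ω => Real.exp (-α * X ω)) ℙ)
    (hYi : Integrable (fun ω => Real.exp (-α * Y ω)) ℙ) :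
    (∫ ω, Real.exp (-α * (Real.sign (X ω) * Real.sign (Y ω) * min |X ω| |Y ω|)))
      ≤ (∫ ω, Real.exp (-α * X ω)) + ∫ ω, Real.exp (-α * Y ω) := by
  set f : Ω → ℝ := fun ω =>
    Real.exp (-α * (Real.sign (X ω) * Real.sign (Y ω) * min |X ω| |Y ω|)) with hf
  set g : Ω → ℝ := fun ω => Real.exp (-α * X ω) + Real.exp (-α * Y ω) with hg
  have hgi : Integrable g ℙ := hXi.add hYi
  have hfmeas : Measurable f := by
    apply Real.measurable_exp.comp
    apply (measurable_const.mul _)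
    exact ((sign_monotone_real.measurable.comp hX).mul
      (sign_monotone_real.measurable.comp hY)).mul (hX.abs.min hY.abs)
  have hbound : ∀ᵐ ω ∂ℙ, f ω ≤ g ω := by
    filter_upwards [hXne, hYne] with ω hx hy
    exact key_pointwise α (X ω) (Y ω) hα hx hy
  have hfi : Integrable f ℙ := by
    apply hgi.mono hfmeas.aestronglyMeasurable
    filter_upwards [hbound] with ω hb
    rw [Real.norm_eq_abs, Real.norm_eq_abs, abs_of_pos (Real.exp_pos _)]
    calc f ω ≤ g ω := hb
    _ ≤ |g ω| := le_abs_self _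
  calc (∫ ω, f ω) ≤ ∫ ω, g ω := integral_mono_ae hfi hgi hbound
  _ = (∫ ω, Real.exp (-α * X ω)) + ∫ ω, Real.exp (-α * Y ω) :=
      integral_add hXi hYi
end

section
/- Let X and Y be independent random variables with (Lebesgue) densities a and b on ℝ satisfying, for all x > 0: a(x) ≥ a(−x), b(x) ≥ b(−x). Let c be the density of Z = sign(X)sign(Y)min(|X|,|Y|). Then c(x) ≥ c(−x) for all x > 0. -/
open MeasureTheory Real

lemma tail_bias (f : ℝ → ℝ) (hfi : Integrable f)
    (hbias : ∀ x > (0:ℝ), f (-x) ≤ f x) (x : ℝ) (hx : 0 < x) :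
    (∫ s in Set.Iio (-x), f s) ≤ ∫ s in Set.Ioi x, f s := by
  have h1 : (∫ s in Set.Ioi x, f (-s)) = ∫ s in Set.Iio (-x), f s := by
    rw [integral_comp_neg_Ioi, ← integral_Iic_eq_integral_Iio]
  rw [← h1]
  apply setIntegral_mono_on (hfi.comp_neg.integrableOn) (hfi.integrableOn)
    measurableSet_Ioi
  intro s hs
  exact hbias s (lt_trans hx hs)

/-- Positively biased densities remain positively biased under the min-sum
check node operation. -/
theorem minsum_check_preserves_bias
    (a b c : ℝ → ℝ)
    (ha0 : ∀ x, 0 ≤ a x) (hb0 : ∀ x, 0 ≤ b x)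
    (hai : Integrable a) (hbi : Integrable b)
    (ha1 : ∫ x, a x = 1) (hb1 : ∫ x, b x = 1)
    (habias : ∀ x > (0:ℝ), a (-x) ≤ a x)
    (hbbias : ∀ x > (0:ℝ), b (-x) ≤ b x)
    (hc : ∀ x : ℝ, c x =
      a x * (∫ s in Set.Ioi |x|, b s) + b x * (∫ s in Set.Ioi |x|, a s)
        + a (-x) * (∫ s in Set.Iio (-|x|), b s)
        + b (-x) * (∫ s in Set.Iio (-|x|), a s)) :
    ∀ x > (0:ℝ), c (-x) ≤ c x := by
  intro x hx
  have hA := tail_bias a hai habias x hx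
  have hB := tail_bias b hbi hbbias x hx
  have h1 := hc x
  have h2 := hc (-x)
  rw [abs_of_pos hx] at h1
  rw [abs_neg, abs_of_pos hx, neg_neg] at h2
  have ha' := habias x hx
  have hb' := hbbias x hx
  nlinarith [mul_nonneg (sub_nonneg.2 ha') (sub_nonneg.2 hB),
    mul_nonneg (sub_nonneg.2 hb') (sub_nonneg.2 hA)]
end

section
/- Let X and Y be independent random variables with densities a and b on ℝ satisfying, for all x > 0: a(x) ≥ a(−x), b(x) ≥ b(−x), a(x) ≤ e^x·a(−x), and b(x) ≤ e^x·b(−x). Let c be the density of Z = sign(X)sign(Y)min(|X|,|Y|). Then c(x) ≤ e^x·c(−x) for all x > 0. -/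
open MeasureTheory Real

/-- The upper bound `c(x) ≤ eˣ c(−x)` is preserved by the min-sum check node
operation for positively biased densities satisfying `a(x) ≤ eˣ a(−x)`. -/
theorem minsum_check_preserves_exp_bound
    (a b c : ℝ → ℝ)
    (ha0 : ∀ x, 0 ≤ a x) (hb0 : ∀ x, 0 ≤ b x)
    (hai : Integrable a) (hbi : Integrable b)
    (ha1 : ∫ x, a x = 1) (hb1 : ∫ x, b x = 1)
    (habias : ∀ x > (0:ℝ), a (-x) ≤ a x)
    (hbbias : ∀ x > (0:ℝ), b (-x) ≤ b x)
    (haexp : ∀ x > (0:ℝ), a x ≤ Real.exp x * a (-x))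
    (hbexp : ∀ x > (0:ℝ), b x ≤ Real.exp x * b (-x))
    (hc : ∀ x : ℝ, c x =
      a x * (∫ s in Set.Ioi |x|, b s) + b x * (∫ s in Set.Ioi |x|, a s)
        + a (-x) * (∫ s in Set.Iio (-|x|), b s)
        + b (-x) * (∫ s in Set.Iio (-|x|), a s)) :
    ∀ x > (0:ℝ), c x ≤ Real.exp x * c (-x) := by
  intro x hx
  have hax : |(-x)| = |x| := abs_neg x
  have hnn : x = -(-x) := by ring
  rw [hc x, hc (-x), hax, ← hnn]
  set Bp := ∫ s in Set.Ioi |x|, b s with hBp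
  set Ap := ∫ s in Set.Ioi |x|, a s with hAp
  set Bm := ∫ s in Set.Iio (-|x|), b s with hBm
  set Am := ∫ s in Set.Iio (-|x|), a s with hAm
  have hBp0 : 0 ≤ Bp := setIntegral_nonneg measurableSet_Ioi fun s _ => hb0 s
  have hAp0 : 0 ≤ Ap := setIntegral_nonneg measurableSet_Ioi fun s _ => ha0 s
  have hBm0 : 0 ≤ Bm := setIntegral_nonneg measurableSet_Iio fun s _ => hb0 s
  have hAm0 : 0 ≤ Am := setIntegral_nonneg measurableSet_Iio fun s _ => ha0 s
  have he1 : (1:ℝ) ≤ Real.exp x := by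
    have := Real.exp_le_exp.2 (le_of_lt hx)
    simpa using Real.one_le_exp (le_of_lt hx)
  have h1 : a x * Bp ≤ Real.exp x * (a (-x) * Bp) := by
    rw [← mul_assoc]; exact mul_le_mul_of_nonneg_right (haexp x hx) hBp0
  have h2 : b x * Ap ≤ Real.exp x * (b (-x) * Ap) := by
    rw [← mul_assoc]; exact mul_le_mul_of_nonneg_right (hbexp x hx) hAp0
  have h3 : a (-x) * Bm ≤ Real.exp x * (a x * Bm) := by
    rw [← mul_assoc]
    refine mul_le_mul_of_nonneg_right ?_ hBm0
    calc a (-x) ≤ a x := habias x hx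
      _ = 1 * a x := (one_mul _).symm
      _ ≤ Real.exp x * a x := mul_le_mul_of_nonneg_right he1 (ha0 x)
  have h4 : b (-x) * Am ≤ Real.exp x * (b x * Am) := by
    rw [← mul_assoc]
    refine mul_le_mul_of_nonneg_right ?_ hAm0
    calc b (-x) ≤ b x := hbbias x hx
      _ = 1 * b x := (one_mul _).symm
      _ ≤ Real.exp x * b x := mul_le_mul_of_nonneg_right he1 (hb0 x)
  calc a x * Bp + b x * Ap + a (-x) * Bm + b (-x) * Am
      ≤ Real.exp x * (a (-x) * Bp) + Real.exp x * (b (-x) * Ap)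
        + Real.exp x * (a x * Bm) + Real.exp x * (b x * Am) := by
        gcongr
    _ = Real.exp x * (a (-x) * Bp + b (-x) * Ap + a x * Bm + b x * Am) := by ring
end

section
/- Let a be a probability density on ℝ satisfying the symmetry condition a(−x) = e^{−x}·a(x) for all x. Then for every α > 0, ∫ e^{−αx} a(x) dx ≥ ∫ e^{−x/2} a(x) dx, i.e., B_α(a) ≥ B(a), with the Bhattacharyya parameter (α = 1/2) being the minimum over α > 0. -/
open MeasureTheory Real

/-- For a symmetric density `a` (i.e. `a(−x) = e^{−x} a(x)`), the exponential
functional `B_α(a) = ∫ e^{−αx} a(x) dx` is minimized at `α = 1/2`: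
`B_α(a) ≥ B(a)` for every `α > 0`. -/
theorem Balpha_ge_bhattacharyya_of_symmetric
    (a : ℝ → ℝ) (ha0 : ∀ x, 0 ≤ a x) (hai : Integrable a) (ha1 : ∫ x, a x = 1)
    (hsym : ∀ x : ℝ, a (-x) = Real.exp (-x) * a x)
    (α : ℝ) (hα : 0 < α)
    (hint : Integrable (fun x => Real.exp (-α * x) * a x))
    (hint2 : Integrable (fun x => Real.exp (-x / 2) * a x)) :
    (∫ x, Real.exp (-x / 2) * a x) ≤ ∫ x, Real.exp (-α * x) * a x := by
  set g : ℝ → ℝ := fun x => Real.exp (-α * x) * a x with hg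
  have hgneg : ∀ x, g (-x) = Real.exp ((α - 1) * x) * a x := by
    intro x
    simp only [hg, hsym x, mul_neg, neg_neg]
    rw [← mul_assoc, ← Real.exp_add]
    ring_nf
  have hintneg : Integrable (fun x => g (-x)) := hint.comp_neg
  -- pointwise AM-GM
  have hpt : ∀ x, Real.exp (-x / 2) * a x ≤ (g x + g (-x)) / 2 := by
    intro x
    rw [hgneg x]
    have h1 : Real.exp (-x / 2) = Real.exp (-α * x / 2) * Real.exp ((α - 1) * x / 2) := by
      rw [← Real.exp_add]; ring_nf
    have h2 : 2 * (Real.exp (-α * x / 2) * Real.exp ((α - 1) * x / 2)) ≤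
        Real.exp (-α * x / 2) ^ 2 + Real.exp ((α - 1) * x / 2) ^ 2 := by
      nlinarith [sq_nonneg (Real.exp (-α * x / 2) - Real.exp ((α - 1) * x / 2))]
    have h3 : Real.exp (-α * x / 2) ^ 2 = Real.exp (-α * x) := by
      rw [← Real.exp_nat_mul]; ring_nf
    have h4 : Real.exp ((α - 1) * x / 2) ^ 2 = Real.exp ((α - 1) * x) := by
      rw [← Real.exp_nat_mul]; ring_nf
    rw [h1]; simp only [hg]
    have := ha0 x
    nlinarith [h2, h3, h4]
  have hmono : (∫ x, Real.exp (-x / 2) * a x) ≤ ∫ x, (g x + g (-x)) / 2 :=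
    integral_mono hint2 ((hint.add hintneg).div_const 2) hpt
  have heq : (∫ x, (g x + g (-x)) / 2) = ∫ x, g x := by
    rw [integral_div, integral_add hint hintneg, integral_neg_eq_self g]
    ring
  rw [heq] at hmono
  exact hmono
end

section
/- Let p, q ∈ [0,1] and 0 ≤ y ≤ x. Consider the two-point measures a = p·δ_{−x} + (1−p)·δ_x and b = q·δ_{−y} + (1−q)·δ_y, and let c be the distribution of sign(X)sign(Y)min(|X|,|Y|) where X ∼ a and Y ∼ b are independent, namely c = (p(1−q) + q(1−p))·δ_{−y} + (pq + (1−p)(1−q))·δ_y. Then B(c) ≤ B(a) + B(b), where B(μ) = ∫ e^{−z/2} μ(dz). -/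
open MeasureTheory Real

lemma integrable_dirac' (f : ℝ → ℝ) (hf : Continuous f) (u : ℝ) :
    Integrable f (Measure.dirac u) := by
  refine ⟨hf.aestronglyMeasurable, ?_⟩
  rw [HasFiniteIntegral, lintegral_dirac]
  exact ENNReal.coe_lt_top

lemma two_point_integral (r s : ℝ) (hr : 0 ≤ r) (hs : 0 ≤ s) (u v : ℝ)
    (f : ℝ → ℝ) (hf : Continuous f) :
    (∫ z, f z ∂(ENNReal.ofReal r • Measure.dirac u + ENNReal.ofReal s • Measure.dirac v))
      = r * f u + s * f v := by
  have h1 : Integrable f (ENNReal.ofReal r • Measure.dirac u) :=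
    (integrable_dirac' f hf u).smul_measure ENNReal.ofReal_ne_top
  have h2 : Integrable f (ENNReal.ofReal s • Measure.dirac v) :=
    (integrable_dirac' f hf v).smul_measure ENNReal.ofReal_ne_top
  rw [integral_add_measure h1 h2, integral_smul_measure, integral_smul_measure,
    integral_dirac, integral_dirac, smul_eq_mul, smul_eq_mul,
    ENNReal.toReal_ofReal hr, ENNReal.toReal_ofReal hs]

/-- Bhattacharyya subadditivity for generalized BSC densities: two-point input
measures `a = p δ_{−x} + (1−p) δ_x`, `b = q δ_{−y} + (1−q) δ_y` with
`0 ≤ y ≤ x` yield the min-sum check output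
`c = (p(1−q)+q(1−p)) δ_{−y} + (pq+(1−p)(1−q)) δ_y`, and `B(c) ≤ B(a) + B(b)`. -/
theorem gbsc_bhattacharyya_subadd
    (p q x y : ℝ)
    (hp : p ∈ Set.Icc (0:ℝ) 1) (hq : q ∈ Set.Icc (0:ℝ) 1)
    (hy : 0 ≤ y) (hyx : y ≤ x)
    (a b c : Measure ℝ)
    (ha : a = ENNReal.ofReal p • Measure.dirac (-x)
              + ENNReal.ofReal (1 - p) • Measure.dirac x)
    (hb : b = ENNReal.ofReal q • Measure.dirac (-y)
              + ENNReal.ofReal (1 - q) • Measure.dirac y)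
    (hc : c = ENNReal.ofReal (p * (1 - q) + q * (1 - p)) • Measure.dirac (-y)
              + ENNReal.ofReal (p * q + (1 - p) * (1 - q)) • Measure.dirac y) :
    (∫ z, Real.exp (-z / 2) ∂c)
      ≤ (∫ z, Real.exp (-z / 2) ∂a) + ∫ z, Real.exp (-z / 2) ∂b := by
  obtain ⟨hp0, hp1⟩ := hp
  obtain ⟨hq0, hq1⟩ := hq
  have hf : Continuous (fun z : ℝ => Real.exp (-z / 2)) := by continuity
  subst ha hb hc
  rw [two_point_integral _ _ hp0 (by linarith) _ _ _ hf,
      two_point_integral _ _ hq0 (by linarith) _ _ _ hf,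
      two_point_integral _ _ (by nlinarith) (by nlinarith) _ _ _ hf]
  have hA : Real.exp (- -y / 2) = (Real.exp (-y / 2))⁻¹ := by
    rw [← Real.exp_neg]; ring_nf
  have hB : Real.exp (- -x / 2) = (Real.exp (-x / 2))⁻¹ := by
    rw [← Real.exp_neg]; ring_nf
  rw [hA, hB]
  set A := Real.exp (-y / 2) with hAdef
  set B := Real.exp (-x / 2) with hBdef
  have hApos : 0 < A := Real.exp_pos _
  have hBpos : 0 < B := Real.exp_pos _
  have hA1 : A ≤ 1 := Real.exp_le_one_iff.mpr (by linarith)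
  have hBA : B ≤ A := Real.exp_le_exp.mpr (by linarith)
  have hAinv : A * A⁻¹ = 1 := mul_inv_cancel₀ hApos.ne'
  have hBinv : B * B⁻¹ = 1 := mul_inv_cancel₀ hBpos.ne'
  have hAinv1 : 1 ≤ A⁻¹ := by nlinarith
  have hBAinv : A⁻¹ ≤ B⁻¹ := by nlinarith
  nlinarith [mul_nonneg hp0 hq0, mul_nonneg hp0 (sub_nonneg.2 hq1),
    mul_nonneg (sub_nonneg.2 hp1) hq0, mul_nonneg (sub_nonneg.2 hp1) (sub_nonneg.2 hq1),
    mul_nonneg hApos.le (sub_nonneg.2 hA1),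
    mul_nonneg (mul_nonneg hp0 hq0) (sub_nonneg.2 hBAinv),
    mul_nonneg hp0 (sub_nonneg.2 hBAinv),
    mul_nonneg (mul_nonneg hp0 hq0) (sub_nonneg.2 hA1),
    mul_nonneg hp0 (sub_nonneg.2 hBA)]
end

section
/- Let a and b be probability densities on ℝ satisfying a(x) ≥ a(−x) and b(x) ≥ b(−x) for all x > 0, and let c(x) = a(x)·Q_b(|x|) + b(x)·Q_a(|x|) + a(−x)·R_b(|x|) + b(−x)·R_a(|x|), where Q_f(t) = ∫_t^∞ f(s) ds and R_f(t) = ∫_{−∞}^{−t} f(s) ds. Then for all x > 0, c(x) − c(−x) = (a(x) − a(−x))(Q_b(x) − R_b(x)) + (b(x) − b(−x))(Q_a(x) − R_a(x)) ≥ 0. -/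
open MeasureTheory Real

lemma QR_nonneg (f : ℝ → ℝ) (hf0 : ∀ x, 0 ≤ f x) (hfi : Integrable f)
    (hbias : ∀ x > (0:ℝ), f (-x) ≤ f x) (x : ℝ) (hx : 0 < x) :
    0 ≤ (∫ s in Set.Ioi x, f s) - ∫ s in Set.Iio (-x), f s := by
  have h1 : (∫ s in Set.Iio (-x), f s) = ∫ s in Set.Ioi x, f (-s) := by
    rw [← integral_Iic_eq_integral_Iio]
    exact (integral_comp_neg_Ioi x f).symm
  rw [h1, ← integral_sub (hfi.restrict) ((hfi.comp_neg).restrict)]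
  apply setIntegral_nonneg measurableSet_Ioi
  intro s hs
  have : 0 < s := lt_trans hx hs
  simpa using hbias s this

/-- Asymmetry identity and nonnegativity for the min-sum check node output
density. -/
theorem minsum_check_asymmetry_identity
    (a b c : ℝ → ℝ)
    (ha0 : ∀ x, 0 ≤ a x) (hb0 : ∀ x, 0 ≤ b x)
    (hai : Integrable a) (hbi : Integrable b)
    (ha1 : ∫ x, a x = 1) (hb1 : ∫ x, b x = 1)
    (habias : ∀ x > (0:ℝ), a (-x) ≤ a x)
    (hbbias : ∀ x > (0:ℝ), b (-x) ≤ b x)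
    (hc : ∀ x : ℝ, c x =
      a x * (∫ s in Set.Ioi |x|, b s) + b x * (∫ s in Set.Ioi |x|, a s)
        + a (-x) * (∫ s in Set.Iio (-|x|), b s)
        + b (-x) * (∫ s in Set.Iio (-|x|), a s)) :
    ∀ x > (0:ℝ),
      (c x - c (-x)
          = (a x - a (-x)) * ((∫ s in Set.Ioi x, b s) - ∫ s in Set.Iio (-x), b s)
            + (b x - b (-x)) * ((∫ s in Set.Ioi x, a s) - ∫ s in Set.Iio (-x), a s))
        ∧ 0 ≤ c x - c (-x) := by
  intro x hx
  have habs : |x| = x := abs_of_pos hx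
  have habs' : |(-x)| = x := by rw [abs_neg]; exact habs
  have hid : c x - c (-x)
      = (a x - a (-x)) * ((∫ s in Set.Ioi x, b s) - ∫ s in Set.Iio (-x), b s)
        + (b x - b (-x)) * ((∫ s in Set.Ioi x, a s) - ∫ s in Set.Iio (-x), a s) := by
    rw [hc x, hc (-x), habs, habs', neg_neg]
    ring
  refine ⟨hid, ?_⟩
  rw [hid]
  have hQa := QR_nonneg a ha0 hai habias x hx
  have hQb := QR_nonneg b hb0 hbi hbbias x hx
  have hax : 0 ≤ a x - a (-x) := sub_nonneg.2 (habias x hx)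
  have hbx : 0 ≤ b x - b (-x) := sub_nonneg.2 (hbbias x hx)
  positivity
end
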